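/- Let a < b be reals, let p, q be real exponents with 1 ≤ q < p < ∞, let ξ, η ≥ 0 and let h : ℝ → ℝ satisfy |h(u₁) − h(u₂)| ≤ (ξ + η ρ^{(p−q)/q}) |u₁ − u₂| whenever |u₁|, |u₂| ≤ ρ, for every ρ > 0. Then for every r > 0 and every x₁, x₂ ∈ L^p([a,b]) with ‖x₁‖_{L^p} ≤ r and ‖x₂‖_{L^p} ≤ r, the compositions h∘x₁ and h∘x₂ differ by an L^q function and ‖h∘x₁ − h∘x₂‖_{L^q} ≤ (ξ (b−a)^{(p−q)/(pq)} + η r^{(p−q)/q}) ‖x₁ − x₂‖_{L^p}. -/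

import Mathlib

open MeasureTheory Filter ENNReal Topology

/-- Variable Lipschitz estimate for the superposition operator `H x = h ∘ x`
from `L^p[a,b]` to `L^q[a,b]` on balls: if
`|h(u₁) - h(u₂)| ≤ (ξ + η ρ^{(p-q)/q}) |u₁ - u₂|` for `|u₁|,|u₂| ≤ ρ`, then
`‖h∘x₁ - h∘x₂‖_{L^q} ≤ (ξ (b-a)^{(p-q)/(pq)} + η r^{(p-q)/q}) ‖x₁ - x₂‖_{L^p}`
whenever `‖x₁‖_{L^p}, ‖x₂‖_{L^p} ≤ r`. -/
theorem superposition_operator_variable_lipschitz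
    (a b : ℝ) (hab : a < b) (p q : ℝ) (hq : 1 ≤ q) (hqp : q < p)
    (ξ η : ℝ) (hξ : 0 ≤ ξ) (hη : 0 ≤ η) (h : ℝ → ℝ)
    (hh : ∀ ρ : ℝ, 0 < ρ → ∀ u₁ u₂ : ℝ, |u₁| ≤ ρ → |u₂| ≤ ρ →
      |h u₁ - h u₂| ≤ (ξ + η * ρ ^ ((p - q) / q)) * |u₁ - u₂|) :
    ∀ r : ℝ, 0 < r → ∀ x₁ x₂ : ℝ → ℝ,
      MemLp x₁ (ENNReal.ofReal p) (volume.restrict (Set.Icc a b)) →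
      MemLp x₂ (ENNReal.ofReal p) (volume.restrict (Set.Icc a b)) →
      eLpNorm x₁ (ENNReal.ofReal p) (volume.restrict (Set.Icc a b)) ≤ ENNReal.ofReal r →
      eLpNorm x₂ (ENNReal.ofReal p) (volume.restrict (Set.Icc a b)) ≤ ENNReal.ofReal r →
      MemLp (fun t => h (x₁ t) - h (x₂ t)) (ENNReal.ofReal q)
          (volume.restrict (Set.Icc a b)) ∧
        eLpNorm (fun t => h (x₁ t) - h (x₂ t)) (ENNReal.ofReal q)
            (volume.restrict (Set.Icc a b)) ≤
          ENNReal.ofReal (ξ * (b - a) ^ ((p - q) / (p * q)) + η * r ^ ((p - q) / q)) *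
            eLpNorm (fun t => x₁ t - x₂ t) (ENNReal.ofReal p)
              (volume.restrict (Set.Icc a b)) := by
  intro r hr x₁ x₂ hx₁ hx₂ hb₁ hb₂
  set μ := volume.restrict (Set.Icc a b) with hμ
  have hq0 : (0:ℝ) < q := lt_of_lt_of_le one_pos hq
  have hp0 : (0:ℝ) < p := hq0.trans hqp
  have hpq' : (0:ℝ) < p - q := by linarith
  set α : ℝ := (p - q) / q with hαdef
  have hα : 0 < α := div_pos hpq' hq0
  set β : ℝ := (p - q) / (p * q) with hβdef
  have hba : (0:ℝ) < b - a := by linarith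
  -- pointwise Lipschitz-type bound
  have hpt : ∀ u v : ℝ, |h u - h v| ≤ (ξ + η * (max |u| |v|) ^ α) * |u - v| := by
    intro u v
    rcases eq_or_lt_of_le (le_trans (abs_nonneg u) (le_max_left |u| |v|)) with h0 | h0
    · have hu : u = 0 := abs_eq_zero.mp (le_antisymm (h0 ▸ le_max_left _ _) (abs_nonneg u))
      have hv : v = 0 := abs_eq_zero.mp (le_antisymm (h0 ▸ le_max_right _ _) (abs_nonneg v))
      simp [hu, hv]
    · exact hh _ h0 u v (le_max_left _ _) (le_max_right _ _)
  -- h is continuous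
  have hcont : Continuous h := by
    rw [continuous_iff_continuousAt]
    intro u
    refine continuousAt_of_locally_lipschitz one_pos (ξ + η * (|u| + 1) ^ α) (fun y hy => ?_)
    have hy1 : |y - u| < 1 := by rwa [Real.dist_eq] at hy
    have h1 : max |y| |u| ≤ |u| + 1 := by
      refine max_le ?_ (by linarith)
      have := abs_sub_abs_le_abs_sub y u
      linarith
    calc dist (h y) (h u) = |h y - h u| := Real.dist_eq _ _
      _ ≤ (ξ + η * (max |y| |u|) ^ α) * |y - u| := hpt y u
      _ ≤ (ξ + η * (|u| + 1) ^ α) * dist y u := by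
          rw [Real.dist_eq]
          refine mul_le_mul_of_nonneg_right ?_ (abs_nonneg _)
          have hb := Real.rpow_le_rpow (le_trans (abs_nonneg y) (le_max_left _ _)) h1 hα.le
          have := mul_le_mul_of_nonneg_left hb hη
          linarith
  have m₁ := hx₁.1
  have m₂ := hx₂.1
  set d : ℝ → ℝ := fun t => x₁ t - x₂ t with hddef
  have md : AEStronglyMeasurable d μ := m₁.sub m₂
  have hdmem : MemLp d (ENNReal.ofReal p) μ := hx₁.sub hx₂
  set D := eLpNorm d (ENNReal.ofReal p) μ with hDdef
  have hDfin : D ≠ ⊤ := hdmem.2.ne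
  set Dr := D.toReal with hDrdef
  have hDD : ENNReal.ofReal Dr = D := ENNReal.ofReal_toReal hDfin
  have hDr0 : 0 ≤ Dr := ENNReal.toReal_nonneg
  have hP1 : 1 ≤ ENNReal.ofReal p := ENNReal.one_le_ofReal.mpr (by linarith)
  have hQ1 : 1 ≤ ENNReal.ofReal q := ENNReal.one_le_ofReal.mpr hq
  have hQP : ENNReal.ofReal q ≤ ENNReal.ofReal p := ENNReal.ofReal_le_ofReal hqp.le
  have hμuniv : μ Set.univ = ENNReal.ofReal (b - a) := by
    rw [hμ, Measure.restrict_apply_univ, Real.volume_Icc]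
  -- multiplication by a nonneg constant
  have smul_norm : ∀ (cc : ℝ) (f : ℝ → ℝ) (e : ℝ≥0∞), 0 ≤ cc →
      eLpNorm (fun t => cc * f t) e μ = ENNReal.ofReal cc * eLpNorm f e μ := by
    intro cc f e hcc
    have hfe : (fun t => cc * f t) = cc • f := by funext t; simp [smul_eq_mul]
    rw [hfe, eLpNorm_const_smul]
    congr 1
    rw [← ofReal_norm, Real.norm_eq_abs, abs_of_nonneg hcc]
  -- the L^q → L^p embedding
  have embed : ∀ (f : ℝ → ℝ), AEStronglyMeasurable f μ →
      eLpNorm f (ENNReal.ofReal q) μ ≤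
        ENNReal.ofReal ((b - a) ^ β) * eLpNorm f (ENNReal.ofReal p) μ := by
    intro f mf
    have hle := eLpNorm_le_eLpNorm_mul_rpow_measure_univ hQP mf
    rw [hμuniv] at hle
    have he : (1 / (ENNReal.ofReal q).toReal - 1 / (ENNReal.ofReal p).toReal) = β := by
      rw [ENNReal.toReal_ofReal hq0.le, ENNReal.toReal_ofReal hp0.le, hβdef,
        div_sub_div 1 1 hq0.ne' hp0.ne', one_mul, mul_one, mul_comm p q]
    rw [he, ENNReal.ofReal_rpow_of_pos hba] at hle
    exact hle.trans_eq (mul_comm _ _)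
  -- main estimate for each n
  have key : ∀ n : ℕ, 1 ≤ n →
      eLpNorm (fun t => h (x₁ t) - h (x₂ t)) (ENNReal.ofReal q) μ ≤
        ENNReal.ofReal (ξ * (b - a) ^ β + η * (r + Dr * (n:ℝ)⁻¹) ^ α) * D := by
    intro n hn
    have hn0 : ((n:ℝ)) ≠ 0 := Nat.cast_ne_zero.mpr (by omega)
    have hnpos : (0:ℝ) < n := by positivity
    set c : ℝ := (n:ℝ)⁻¹ with hcdef
    have hc0 : 0 < c := inv_pos.mpr hnpos
    set y : ℕ → ℝ → ℝ := fun i t => x₂ t + ((i:ℝ) * c) * d t with hydef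
    have my : ∀ i, AEStronglyMeasurable (y i) μ := fun i => m₂.add (md.const_mul _)
    have hyle : ∀ i : ℕ, i ≤ n → eLpNorm (y i) (ENNReal.ofReal p) μ ≤ ENNReal.ofReal r := by
      intro i hi
      have hθ0 : (0:ℝ) ≤ (i:ℝ) * c := by positivity
      have hθ1 : (i:ℝ) * c ≤ 1 := by
        rw [hcdef]
        rw [← div_eq_mul_inv, div_le_one hnpos]
        exact_mod_cast hi
      have hyeq : y i = fun t => (1 - (i:ℝ) * c) * x₂ t + ((i:ℝ) * c) * x₁ t := by
        funext t; simp only [hydef, hddef]; ring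
      rw [hyeq]
      calc eLpNorm (fun t => (1 - (i:ℝ) * c) * x₂ t + ((i:ℝ) * c) * x₁ t) (ENNReal.ofReal p) μ
          ≤ eLpNorm (fun t => (1 - (i:ℝ) * c) * x₂ t) (ENNReal.ofReal p) μ
            + eLpNorm (fun t => ((i:ℝ) * c) * x₁ t) (ENNReal.ofReal p) μ := by
            refine le_trans (le_of_eq ?_) (eLpNorm_add_le (m₂.const_mul _) (m₁.const_mul _) hP1)
            rfl
        _ ≤ ENNReal.ofReal (1 - (i:ℝ)*c) * ENNReal.ofReal r
            + ENNReal.ofReal ((i:ℝ)*c) * ENNReal.ofReal r := by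
            rw [smul_norm _ _ _ (by linarith), smul_norm _ _ _ hθ0]
            gcongr
        _ = ENNReal.ofReal r := by
            rw [← ENNReal.ofReal_mul (by linarith), ← ENNReal.ofReal_mul hθ0,
              ← ENNReal.ofReal_add (mul_nonneg (by linarith) hr.le) (mul_nonneg hθ0 hr.le)]
            congr 1
            ring
    -- per-step estimate
    have step : ∀ i : ℕ, i < n →
        eLpNorm (fun t => h (y (i+1) t) - h (y i t)) (ENNReal.ofReal q) μ ≤
          ENNReal.ofReal ((ξ * (b - a) ^ β + η * (r + Dr * c) ^ α) * c) * D := by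
      intro i hi
      set g : ℝ → ℝ := fun t => ‖y i t‖ + c * ‖d t‖ with hgdef
      have mg : AEStronglyMeasurable g μ := (my i).norm.add ((md.norm).const_mul _)
      have hg0 : ∀ t, 0 ≤ g t := fun t => by positivity
      set φ : ℝ → ℝ := fun t => g t ^ α with hφdef
      have mφ : AEStronglyMeasurable φ μ :=
        (Real.continuous_rpow_const hα.le).comp_aestronglyMeasurable mg
      have hptw : ∀ t, ‖h (y (i+1) t) - h (y i t)‖ ≤
          ξ * (c * ‖d t‖) + η * (φ t * (c * ‖d t‖)) := by
        intro t
        have hdiff : y (i+1) t - y i t = c * d t := by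
          simp only [hydef]; push_cast; ring
        have hM : max |y (i+1) t| |y i t| ≤ g t := by
          refine max_le ?_ ?_
          · have hstep : y (i+1) t = y i t + c * d t := by
              simp only [hydef]; push_cast; ring
            rw [hstep]
            calc |y i t + c * d t| ≤ |y i t| + |c * d t| := abs_add_le _ _
              _ ≤ g t := by
                  have : 0 ≤ c := hc0.le
                  simp only [hgdef, Real.norm_eq_abs, abs_mul, abs_of_nonneg this]
                  exact le_rfl
          · have h0 : 0 ≤ c * |d t| := by positivity
            simp only [hgdef, Real.norm_eq_abs]
            linarith
        calc ‖h (y (i+1) t) - h (y i t)‖ = |h (y (i+1) t) - h (y i t)| := Real.norm_eq_abs _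
          _ ≤ (ξ + η * (max |y (i+1) t| |y i t|) ^ α) * |y (i+1) t - y i t| := hpt _ _
          _ ≤ (ξ + η * (g t) ^ α) * (c * |d t|) := by
              rw [hdiff, abs_mul, abs_of_nonneg hc0.le]
              refine mul_le_mul_of_nonneg_right ?_ (by positivity)
              have hb := Real.rpow_le_rpow
                (le_trans (abs_nonneg _) (le_max_left |y (i+1) t| |y i t|)) hM hα.le
              have := mul_le_mul_of_nonneg_left hb hη
              linarith
          _ = ξ * (c * ‖d t‖) + η * (φ t * (c * ‖d t‖)) := by
              simp only [hφdef, Real.norm_eq_abs]; ring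
      have mF₁ : AEStronglyMeasurable (fun t => ξ * (c * ‖d t‖)) μ :=
        ((md.norm.const_mul c).const_mul ξ)
      have mF₂ : AEStronglyMeasurable (fun t => η * (φ t * (c * ‖d t‖))) μ :=
        (mφ.mul (md.norm.const_mul c)).const_mul η
      have hsplit : eLpNorm (fun t => h (y (i+1) t) - h (y i t)) (ENNReal.ofReal q) μ ≤
          eLpNorm (fun t => ξ * (c * ‖d t‖) + η * (φ t * (c * ‖d t‖))) (ENNReal.ofReal q) μ :=
        eLpNorm_mono_real hptw
      have htri : eLpNorm (fun t => ξ * (c * ‖d t‖) + η * (φ t * (c * ‖d t‖)))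
            (ENNReal.ofReal q) μ ≤
          eLpNorm (fun t => ξ * (c * ‖d t‖)) (ENNReal.ofReal q) μ
            + eLpNorm (fun t => η * (φ t * (c * ‖d t‖))) (ENNReal.ofReal q) μ := by
        refine le_trans (le_of_eq ?_) (eLpNorm_add_le mF₁ mF₂ hQ1)
        rfl
      -- first term
      have e₁ : eLpNorm (fun t => ξ * (c * ‖d t‖)) (ENNReal.ofReal q) μ ≤
          ENNReal.ofReal (ξ * c * (b - a) ^ β) * D := by
        have hre : (fun t => ξ * (c * ‖d t‖)) = fun t => (ξ * c) * ‖d t‖ := by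
          funext t; ring
        rw [hre, smul_norm (ξ * c) _ _ (by positivity), eLpNorm_norm]
        calc ENNReal.ofReal (ξ * c) * eLpNorm d (ENNReal.ofReal q) μ
            ≤ ENNReal.ofReal (ξ * c) * (ENNReal.ofReal ((b - a) ^ β) * D) := by
              gcongr
              exact embed d md
          _ = ENNReal.ofReal (ξ * c * (b - a) ^ β) * D := by
              rw [← mul_assoc, ← ENNReal.ofReal_mul (by positivity)]
      -- second term
      have hgle : eLpNorm g (ENNReal.ofReal p) μ ≤ ENNReal.ofReal (r + Dr * c) := by
        calc eLpNorm g (ENNReal.ofReal p) μ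
            ≤ eLpNorm (fun t => ‖y i t‖) (ENNReal.ofReal p) μ
              + eLpNorm (fun t => c * ‖d t‖) (ENNReal.ofReal p) μ := by
              refine le_trans (le_of_eq ?_) (eLpNorm_add_le (my i).norm
                (md.norm.const_mul c) hP1)
              rfl
          _ = eLpNorm (y i) (ENNReal.ofReal p) μ + ENNReal.ofReal c * D := by
              rw [eLpNorm_norm, smul_norm c _ _ hc0.le, eLpNorm_norm]
          _ ≤ ENNReal.ofReal r + ENNReal.ofReal c * ENNReal.ofReal Dr := by
              gcongr
              · exact hyle i hi.le
              · rw [hDD]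
          _ = ENNReal.ofReal (r + Dr * c) := by
              rw [← ENNReal.ofReal_mul hc0.le, ← ENNReal.ofReal_add hr.le (by positivity)]
              ring_nf
      set S := ENNReal.ofReal (p * q / (p - q)) with hSdef
      have hconj : 1 / (ENNReal.ofReal q) = 1 / S + 1 / ENNReal.ofReal p := by
        rw [hSdef, one_div, one_div, one_div, ← ENNReal.ofReal_inv_of_pos hq0,
          ← ENNReal.ofReal_inv_of_pos (by positivity), ← ENNReal.ofReal_inv_of_pos hp0,
          ← ENNReal.ofReal_add (by positivity) (by positivity)]
        congr 1
        field_simp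
        ring
      have hHolder : eLpNorm (fun t => φ t * (c * ‖d t‖)) (ENNReal.ofReal q) μ ≤
          eLpNorm φ S μ * eLpNorm (fun t => c * ‖d t‖) (ENNReal.ofReal p) μ := by
        refine le_trans (le_of_eq ?_)
          (eLpNorm_smul_le_mul_eLpNorm (md.norm.const_mul c) mφ (hpqr := ⟨by simpa only [one_div] using hconj.symm⟩))
        rfl
      have eφ : eLpNorm φ S μ ≤ ENNReal.ofReal ((r + Dr * c) ^ α) := by
        have hφn : φ = fun t => ‖g t‖ ^ α := by
          funext t; rw [hφdef, Real.norm_eq_abs, abs_of_nonneg (hg0 t)]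
        have hSα : S * ENNReal.ofReal α = ENNReal.ofReal p := by
          rw [hSdef, ← ENNReal.ofReal_mul (by positivity)]
          congr 1
          rw [hαdef]
          field_simp
        rw [hφn, eLpNorm_norm_rpow g hα, hSα]
        calc eLpNorm g (ENNReal.ofReal p) μ ^ α ≤ (ENNReal.ofReal (r + Dr * c)) ^ α :=
            ENNReal.rpow_le_rpow hgle hα.le
          _ = ENNReal.ofReal ((r + Dr * c) ^ α) := by
              rw [ENNReal.ofReal_rpow_of_pos (by positivity)]
      have e₂ : eLpNorm (fun t => η * (φ t * (c * ‖d t‖))) (ENNReal.ofReal q) μ ≤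
          ENNReal.ofReal (η * ((r + Dr * c) ^ α * c)) * D := by
        rw [smul_norm η _ _ hη]
        calc ENNReal.ofReal η * eLpNorm (fun t => φ t * (c * ‖d t‖)) (ENNReal.ofReal q) μ
            ≤ ENNReal.ofReal η *
                (eLpNorm φ S μ * eLpNorm (fun t => c * ‖d t‖) (ENNReal.ofReal p) μ) := by
              gcongr
          _ ≤ ENNReal.ofReal η *
                (ENNReal.ofReal ((r + Dr * c) ^ α) * (ENNReal.ofReal c * D)) := by
              rw [smul_norm c _ _ hc0.le, eLpNorm_norm]
              gcongr
          _ = ENNReal.ofReal (η * ((r + Dr * c) ^ α * c)) * D := by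
              rw [← mul_assoc, ← mul_assoc, ← ENNReal.ofReal_mul hη,
                ← ENNReal.ofReal_mul (by positivity), mul_assoc η]
      calc eLpNorm (fun t => h (y (i+1) t) - h (y i t)) (ENNReal.ofReal q) μ
          ≤ eLpNorm (fun t => ξ * (c * ‖d t‖)) (ENNReal.ofReal q) μ
            + eLpNorm (fun t => η * (φ t * (c * ‖d t‖))) (ENNReal.ofReal q) μ :=
            hsplit.trans htri
        _ ≤ ENNReal.ofReal (ξ * c * (b - a) ^ β) * D
            + ENNReal.ofReal (η * ((r + Dr * c) ^ α * c)) * D := add_le_add e₁ e₂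
        _ = ENNReal.ofReal ((ξ * (b - a) ^ β + η * (r + Dr * c) ^ α) * c) * D := by
            rw [← add_mul, ← ENNReal.ofReal_add (by positivity) (by positivity)]
            congr 2
            ring
    -- telescoping identity
    have hid : (fun t => h (x₁ t) - h (x₂ t)) =
        ∑ i ∈ Finset.range n, (fun t => h (y (i+1) t) - h (y i t)) := by
      funext t
      rw [Finset.sum_apply, Finset.sum_range_sub (fun i => h (y i t))]
      have hyn : y n t = x₁ t := by
        simp only [hydef, hcdef, hddef]
        rw [mul_inv_cancel₀ hn0]
        ring
      have hy0 : y 0 t = x₂ t := by simp [hydef]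
      rw [hyn, hy0]
    rw [hid]
    have mstep : ∀ i ∈ Finset.range n,
        AEStronglyMeasurable (fun t => h (y (i+1) t) - h (y i t)) μ := by
      intro i _
      exact (hcont.comp_aestronglyMeasurable (my (i+1))).sub
        (hcont.comp_aestronglyMeasurable (my i))
    calc eLpNorm (∑ i ∈ Finset.range n, (fun t => h (y (i+1) t) - h (y i t)))
          (ENNReal.ofReal q) μ
        ≤ ∑ i ∈ Finset.range n,
            eLpNorm (fun t => h (y (i+1) t) - h (y i t)) (ENNReal.ofReal q) μ :=
          eLpNorm_sum_le mstep hQ1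
      _ ≤ ∑ _i ∈ Finset.range n,
            ENNReal.ofReal ((ξ * (b - a) ^ β + η * (r + Dr * c) ^ α) * c) * D :=
          Finset.sum_le_sum (fun i hi => step i (Finset.mem_range.mp hi))
      _ = (n : ℝ≥0∞) * (ENNReal.ofReal ((ξ * (b - a) ^ β + η * (r + Dr * c) ^ α) * c) * D) := by
          rw [Finset.sum_const, Finset.card_range, nsmul_eq_mul]
      _ = ENNReal.ofReal (ξ * (b - a) ^ β + η * (r + Dr * c) ^ α) * D := by
          rw [← mul_assoc, ← ENNReal.ofReal_natCast n, ← ENNReal.ofReal_mul (by positivity)]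
          congr 2
          have hnc : (n:ℝ) * c = 1 := by rw [hcdef, mul_inv_cancel₀ hn0]
          calc (n:ℝ) * ((ξ * (b - a) ^ β + η * (r + Dr * c) ^ α) * c)
              = (ξ * (b - a) ^ β + η * (r + Dr * c) ^ α) * ((n:ℝ) * c) := by ring
            _ = ξ * (b - a) ^ β + η * (r + Dr * c) ^ α := by rw [hnc, mul_one]
  -- pass to the limit n → ∞
  have hlim : Tendsto
      (fun n : ℕ => ENNReal.ofReal (ξ * (b - a) ^ β + η * (r + Dr * (n:ℝ)⁻¹) ^ α) * D)
      atTop (𝓝 (ENNReal.ofReal (ξ * (b - a) ^ β + η * r ^ α) * D)) := by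
    refine ENNReal.Tendsto.mul_const ?_ (Or.inr hDfin)
    refine ENNReal.tendsto_ofReal ?_
    refine Tendsto.const_add _ ?_
    refine Tendsto.const_mul _ ?_
    have h1 : Tendsto (fun n : ℕ => r + Dr * (n:ℝ)⁻¹) atTop (𝓝 r) := by
      have h2 : Tendsto (fun n : ℕ => Dr * (n:ℝ)⁻¹) atTop (𝓝 0) := by
        have := tendsto_inv_atTop_nhds_zero_nat.const_mul Dr
        simpa using this
      simpa using (tendsto_const_nhds (x := r) (f := atTop)).add h2
    exact h1.rpow_const (Or.inl hr.ne')
  have hfinal : eLpNorm (fun t => h (x₁ t) - h (x₂ t)) (ENNReal.ofReal q) μ ≤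
      ENNReal.ofReal (ξ * (b - a) ^ β + η * r ^ α) * D :=
    ge_of_tendsto hlim (eventually_atTop.mpr ⟨1, fun n hn => key n hn⟩)
  refine ⟨⟨(hcont.comp_aestronglyMeasurable m₁).sub (hcont.comp_aestronglyMeasurable m₂), ?_⟩, hfinal⟩
  exact lt_of_le_of_lt hfinal (ENNReal.mul_lt_top ENNReal.ofReal_lt_top hDfin.lt_top)
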